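/- Let {b(k), b*(k), c(k), c*(k) : k ∈ ℤ} be a locally annihilating bosonic Weyl system on a complex vector space W over S = {b, b*, c, c*} with pairing ⟨b,b*⟩ = ⟨c,c*⟩ = −1, ⟨b*,b⟩ = ⟨c*,c⟩ = 1, and all other pairings 0. Define X⁺(m) := √−1·(:bc*:)(m), X⁻(m) := √−1·(:b*c:)(m), and α(m) := (:bb*:)(m) − (:cc*:)(m). Then for all m, n ∈ ℤ: X⁺(m)X⁻(n) − X⁻(n)X⁺(m) = −α(m+n) + m·δ_{m+n,0}·id. (This is the mode form of the relation [x_i^+(z), x_i^-(w)] = −(α_i(w)δ(z−w) + ∂_wδ(z−w)·K) with K = −1, verified in the proof of Theorem 3.5 for the free-field realization x_i^± of the vertices 1 ≤ i ≤ n−1.) -/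

import Mathlib

noncomputable section

/-- A *bosonic Weyl system* over a set `S` of symbols with pairing `pair : S → S → ℂ`
on a complex vector space `W`: a family of operators `op u k` (`u ∈ S`, `k ∈ ℤ`)
such that `[op u k, op v l] = ⟨u,v⟩ δ_{k+l,0} id`. -/
def IsBosonicWeylSystem {S W : Type*} [AddCommGroup W] [Module ℂ W]
    (pair : S → S → ℂ) (op : S → ℤ → Module.End ℂ W) : Prop :=
  ∀ u v : S, ∀ k l : ℤ,
    op u k * op v l - op v l * op u k =
      if k + l = 0 then pair u v • (1 : Module.End ℂ W) else 0

/-- A family of operators is *locally annihilating* if for every vector `w` and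
every symbol `u`, `op u k w = 0` for all sufficiently large `k`. -/
def LocallyAnnihilating {S W : Type*} [AddCommGroup W] [Module ℂ W]
    (op : S → ℤ → Module.End ℂ W) : Prop :=
  ∀ (w : W) (u : S), ∃ K : ℤ, ∀ k : ℤ, K ≤ k → op u k w = 0

/-- The normally ordered quadratic mode
`(:uv:)(m) = Σ_{j<0} u(j)v(m-j) + Σ_{j≥0} v(m-j)u(j)` applied to a vector `w`;
on a locally annihilating system all but finitely many summands vanish, so the
`finsum` computes the intended (finite) sum. -/
def noMode {S W : Type*} [AddCommGroup W] [Module ℂ W]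
    (op : S → ℤ → Module.End ℂ W) (u v : S) (m : ℤ) (w : W) : W :=
  ∑ᶠ j : ℤ, if j < 0 then op u j (op v (m - j) w) else op v (m - j) (op u j w)

end

/-- The four symbols `b, b*, c, c*`. -/
inductive WSym4 : Type
  | b | bs | c | cs
deriving DecidableEq

/-- The pairing `⟨b,b*⟩ = ⟨c,c*⟩ = -1`, `⟨b*,b⟩ = ⟨c*,c⟩ = 1`, all other pairings `0`. -/
def pair4 : WSym4 → WSym4 → ℂ
  | .b, .bs => -1
  | .c, .cs => -1
  | .bs, .b => 1
  | .cs, .c => 1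
  | _, _ => 0

section
variable {W : Type*} [AddCommGroup W] [Module ℂ W] (op : WSym4 → ℤ → Module.End ℂ W)

/-- `X⁺(m) = √-1 (:bc*:)(m)` (applied to a vector). -/
noncomputable def Xplus (m : ℤ) (w : W) : W := Complex.I • noMode op .b .cs m w

/-- `X⁻(m) = √-1 (:b*c:)(m)` (applied to a vector). -/
noncomputable def Xminus (m : ℤ) (w : W) : W := Complex.I • noMode op .bs .c m w

/-- `α(m) = (:bb*:)(m) - (:cc*:)(m)` (applied to a vector). -/
noncomputable def alMode (m : ℤ) (w : W) : W := noMode op .b .bs m w - noMode op .c .cs m w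

end

section Helpers
variable {W : Type*} [AddCommGroup W] [Module ℂ W] {op : WSym4 → ℤ → Module.End ℂ W}

lemma comm_apply (hW : IsBosonicWeylSystem pair4 op) (u v : WSym4) (k l : ℤ) (x : W) :
    op u k (op v l x) = op v l (op u k x) + if k + l = 0 then pair4 u v • x else 0 := by
  have h := LinearMap.congr_fun (hW u v k l) x
  simp only [LinearMap.sub_apply, Module.End.mul_apply] at h
  split_ifs with hc
  · rw [if_pos hc] at h
    simp only [LinearMap.smul_apply, Module.End.one_apply] at h
    exact sub_eq_iff_eq_add'.mp h
  · rw [if_neg hc] at h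
    simp only [LinearMap.zero_apply] at h
    rw [add_zero]
    exact sub_eq_zero.mp h

lemma bound4 (hA : LocallyAnnihilating op) (x : W) :
    ∃ N : ℤ, 1 ≤ N ∧ ∀ (u : WSym4) (k : ℤ), N ≤ k → op u k x = 0 := by
  obtain ⟨Kb, hb⟩ := hA x .b
  obtain ⟨Kbs, hbs⟩ := hA x .bs
  obtain ⟨Kc, hc⟩ := hA x .c
  obtain ⟨Kcs, hcs⟩ := hA x .cs
  refine ⟨max 1 (max (max Kb Kbs) (max Kc Kcs)), le_max_left _ _, ?_⟩
  intro u k hk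
  have h2 := le_trans (le_max_right 1 _) hk
  rw [max_le_iff, max_le_iff, max_le_iff] at h2
  cases u
  · exact hb _ h2.1.1
  · exact hbs _ h2.1.2
  · exact hc _ h2.2.1
  · exact hcs _ h2.2.2

/-- The `j`-th term of `noMode` as an endomorphism. -/
def Aop (op : WSym4 → ℤ → Module.End ℂ W) (u v : WSym4) (r j : ℤ) : Module.End ℂ W :=
  if j < 0 then op u j * op v (r - j) else op v (r - j) * op u j

lemma noMode_eq_sum (hW : IsBosonicWeylSystem pair4 op) {x : W} {N : ℤ} (hN : 1 ≤ N)
    (hx : ∀ (u : WSym4) (k : ℤ), N ≤ k → op u k x = 0) (u v : WSym4) (r : ℤ)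
    {s : Finset ℤ} (hs : Finset.Ioo (r - N) N ⊆ s) :
    noMode op u v r x = ∑ j ∈ s, Aop op u v r j x := by
  have hzero : ∀ j : ℤ, j ∉ Finset.Ioo (r - N) N → Aop op u v r j x = 0 := by
    intro j hj
    rw [Finset.mem_Ioo, not_and_or, not_lt, not_lt] at hj
    unfold Aop
    rcases hj with hj | hj
    · -- j ≤ r - N
      split_ifs with hneg
      · rw [Module.End.mul_apply, hx v (r - j) (by omega), map_zero]
      · rw [Module.End.mul_apply, comm_apply hW v u (r - j) j x,
          hx v (r - j) (by omega), map_zero, zero_add, if_neg (by omega)]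
    · -- N ≤ j
      rw [if_neg (by omega), Module.End.mul_apply, hx u j hj, map_zero]
  have hterm : ∀ j : ℤ,
      (if j < 0 then op u j (op v (r - j) x) else op v (r - j) (op u j x)) = Aop op u v r j x := by
    intro j; unfold Aop; split_ifs <;> rfl
  unfold noMode
  simp only [hterm]
  have hsupp : Function.support (fun j => Aop op u v r j x) ⊆ ↑(Finset.Ioo (r - N) N) := by
    intro j hj
    rw [Finset.mem_coe]
    by_contra h
    exact hj (hzero j h)
  rw [finsum_eq_sum_of_support_subset _ hsupp]
  exact Finset.sum_subset hs (fun j _ hj => hzero j hj)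


lemma ring_helper {R : Type*} [Ring R] (x y z t e1 e2 : R)
    (h1 : x*z = e1 + z*x) (h2 : y*t = e2 + t*y) (h3 : y*z = z*y) (h4 : t*x = x*t)
    (hc2 : ∀ f : R, e2*f = f*e2) :
    (x*y)*(z*t) - (z*t)*(x*y) = e2*(x*z) + e1*(t*y) := by
  have e1' : (x*y)*(z*t) = (x*z)*(y*t) := by
    calc (x*y)*(z*t) = x*(y*z)*t := by noncomm_ring
    _ = x*(z*y)*t := by rw [h3]
    _ = (x*z)*(y*t) := by noncomm_ring
  have e2' : (z*t)*(x*y) = (z*x)*(t*y) := by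
    calc (z*t)*(x*y) = z*(t*x)*y := by noncomm_ring
    _ = z*(x*t)*y := by rw [h4]
    _ = (z*x)*(t*y) := by noncomm_ring
  rw [e1', e2', h1, h2, mul_add, hc2 (e1 + z*x)]
  noncomm_ring

lemma commuting_pair (hW : IsBosonicWeylSystem pair4 op) (u v : WSym4) (hp : pair4 u v = 0)
    (k l : ℤ) : op u k * op v l = op v l * op u k := by
  have h := hW u v k l
  rw [hp] at h
  simp only [zero_smul, ite_self] at h
  exact sub_eq_zero.mp h

lemma central_ite (c : Prop) [Decidable c] (s : ℂ) (f : Module.End ℂ W) :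
    (if c then s • (1 : Module.End ℂ W) else 0) * f
      = f * (if c then s • (1 : Module.End ℂ W) else 0) := by
  split_ifs <;> simp [smul_mul_assoc, mul_smul_comm]

lemma comm4 (hW : IsBosonicWeylSystem pair4 op) (m n j k : ℤ) :
    (op .b j * op .cs (m-j)) * (op .bs k * op .c (n-k))
      - (op .bs k * op .c (n-k)) * (op .b j * op .cs (m-j))
    = (if j + k = m + n then op .b j * op .bs k else 0)
      + (if j + k = 0 then -(op .c (n-k) * op .cs (m-j)) else 0) := by
  have h1 : op .b j * op .bs k
      = (if j + k = 0 then (-1:ℂ) • (1 : Module.End ℂ W) else 0) + op .bs k * op .b j := by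
    have h := hW .b .bs j k
    rw [show pair4 .b .bs = (-1:ℂ) from rfl] at h
    exact sub_eq_iff_eq_add.mp h
  have h2 : op .cs (m-j) * op .c (n-k)
      = (if j + k = m + n then (1:ℂ) • (1 : Module.End ℂ W) else 0)
        + op .c (n-k) * op .cs (m-j) := by
    have h := hW .cs .c (m-j) (n-k)
    rw [show pair4 .cs .c = (1:ℂ) from rfl] at h
    simp only [show ((m-j) + (n-k) = 0) ↔ (j + k = m + n) from by omega] at h
    exact sub_eq_iff_eq_add.mp h
  have h3 : op .cs (m-j) * op .bs k = op .bs k * op .cs (m-j) :=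
    commuting_pair hW .cs .bs rfl _ _
  have h4 : op .c (n-k) * op .b j = op .b j * op .c (n-k) :=
    commuting_pair hW .c .b rfl _ _
  rw [ring_helper (op .b j) (op .cs (m-j)) (op .bs k) (op .c (n-k)) _ _ h1 h2 h3 h4
    (central_ite _ _)]
  split_ifs <;> simp [smul_mul_assoc]


lemma Aop_comm (hW : IsBosonicWeylSystem pair4 op) (u v : WSym4) (hp : pair4 v u = 0)
    (r j : ℤ) : Aop op u v r j = op u j * op v (r - j) := by
  unfold Aop
  split_ifs with h
  · rfl
  · exact commuting_pair hW v u hp _ _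

end Helpers

/-- for a locally annihilating bosonic Weyl system `{b, b*, c, c*}` as
above, `[X⁺(m), X⁻(n)] = -α(m+n) + m δ_{m+n,0} id` (mode form of
`[x_i^+(z), x_i^-(w)] = -(α_i(w)δ(z-w) + ∂_wδ(z-w)K)` with `K = -1`). -/
theorem Xplus_Xminus_commutator {W : Type*} [AddCommGroup W] [Module ℂ W]
    (op : WSym4 → ℤ → Module.End ℂ W)
    (hW : IsBosonicWeylSystem pair4 op) (hA : LocallyAnnihilating op)
    (m n : ℤ) (w : W) :
    Xplus op m (Xminus op n w) - Xminus op n (Xplus op m w) =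
      -alMode op (m + n) w + (if m + n = 0 then (m : ℂ) • w else 0) := by
  obtain ⟨N0, hN01, hN0⟩ := bound4 hA w
  obtain ⟨N1, _, hN1⟩ := bound4 hA (Xminus op n w)
  obtain ⟨N2, _, hN2⟩ := bound4 hA (Xplus op m w)
  set N : ℤ := max N0 (max N1 N2) with hNdef
  have hN : 1 ≤ N := le_trans hN01 (le_max_left _ _)
  have hNw : ∀ (u : WSym4) (k : ℤ), N ≤ k → op u k w = 0 :=
    fun u k hk => hN0 u k (le_trans (le_max_left _ _) hk)
  have hNm : ∀ (u : WSym4) (k : ℤ), N ≤ k → op u k (Xminus op n w) = 0 :=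
    fun u k hk => hN1 u k (le_trans (le_trans (le_max_left _ _) (le_max_right _ _)) hk)
  have hNp : ∀ (u : WSym4) (k : ℤ), N ≤ k → op u k (Xplus op m w) = 0 :=
    fun u k hk => hN2 u k (le_trans (le_trans (le_max_right _ _) (le_max_right _ _)) hk)
  set M : ℤ := N + (m.natAbs : ℤ) + (n.natAbs : ℤ) + 1 with hMdef
  set M2 : ℤ := M + (m.natAbs : ℤ) + (n.natAbs : ℤ) + 1 with hM2def
  set J : Finset ℤ := Finset.Ioo (-M) M with hJdef
  set K : Finset ℤ := Finset.Ioo (-M2) M2 with hKdef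
  have hJK : J ⊆ K := Finset.Ioo_subset_Ioo (by omega) (by omega)
  have eXm : Xminus op n w = Complex.I • ∑ k ∈ K, Aop op .bs .c n k w := by
    unfold Xminus
    rw [noMode_eq_sum hW hN hNw .bs .c n
      (Finset.Ioo_subset_Ioo (by omega) (by omega) : Finset.Ioo (n - N) N ⊆ K)]
  have eXp : Xplus op m w = Complex.I • ∑ k ∈ K, Aop op .b .cs m k w := by
    unfold Xplus
    rw [noMode_eq_sum hW hN hNw .b .cs m
      (Finset.Ioo_subset_Ioo (by omega) (by omega) : Finset.Ioo (m - N) N ⊆ K)]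
  have hAz : ∀ j : ℤ, j ∉ J → ∀ x : W, (∀ (u : WSym4) (k : ℤ), N ≤ k → op u k x = 0) →
      ∀ u v : WSym4, ∀ r : ℤ, N ≤ M + r → Aop op u v r j x = 0 := by
    intro j hj x hx u v r hr
    rw [hJdef, Finset.mem_Ioo, not_and_or, not_lt, not_lt] at hj
    unfold Aop
    rcases hj with hj | hj
    · rw [if_pos (by omega), Module.End.mul_apply, hx v (r - j) (by omega), map_zero]
    · rw [if_neg (by omega), Module.End.mul_apply, hx u j (by omega), map_zero]
  have hAwz : ∀ j : ℤ, j ∉ J → Aop op .b .cs m j w = 0 :=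
    fun j hj => hAz j hj w hNw .b .cs m (by omega)
  have hASz : ∀ j : ℤ, j ∉ J → Aop op .b .cs m j (∑ k ∈ K, Aop op .bs .c n k w) = 0 := by
    intro j hj
    have h := hAz j hj (Xminus op n w) hNm .b .cs m (by omega)
    rw [eXm, map_smul, smul_eq_zero] at h
    exact h.resolve_left Complex.I_ne_zero
  have hBSz : ∀ j : ℤ, j ∉ J → Aop op .bs .c n j (∑ k ∈ K, Aop op .b .cs m k w) = 0 := by
    intro j hj
    have h := hAz j hj (Xplus op m w) hNp .bs .c n (by omega)
    rw [eXp, map_smul, smul_eq_zero] at h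
    exact h.resolve_left Complex.I_ne_zero
  have hsplit1 : Xplus op m (Xminus op n w)
      = (-1 : ℂ) • ∑ j ∈ J, ∑ k ∈ K, Aop op .b .cs m j (Aop op .bs .c n k w) := by
    calc Xplus op m (Xminus op n w)
        = Complex.I • ∑ j ∈ J, Aop op .b .cs m j (Xminus op n w) := by
          unfold Xplus
          rw [noMode_eq_sum hW hN hNm .b .cs m
            (Finset.Ioo_subset_Ioo (by omega) (by omega) : Finset.Ioo (m - N) N ⊆ J)]
      _ = Complex.I • ∑ j ∈ J,
            Aop op .b .cs m j (Complex.I • ∑ k ∈ K, Aop op .bs .c n k w) := by rw [← eXm]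
      _ = (-1 : ℂ) • ∑ j ∈ J, ∑ k ∈ K, Aop op .b .cs m j (Aop op .bs .c n k w) := by
          simp only [map_smul, map_sum, ← Finset.smul_sum, smul_smul, Complex.I_mul_I]
  have hsplit2 : Xminus op n (Xplus op m w)
      = (-1 : ℂ) • ∑ j ∈ J, ∑ k ∈ K, Aop op .bs .c n j (Aop op .b .cs m k w) := by
    calc Xminus op n (Xplus op m w)
        = Complex.I • ∑ j ∈ J, Aop op .bs .c n j (Xplus op m w) := by
          unfold Xminus
          rw [noMode_eq_sum hW hN hNp .bs .c n
            (Finset.Ioo_subset_Ioo (by omega) (by omega) : Finset.Ioo (n - N) N ⊆ J)]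
      _ = Complex.I • ∑ j ∈ J,
            Aop op .bs .c n j (Complex.I • ∑ k ∈ K, Aop op .b .cs m k w) := by rw [← eXp]
      _ = (-1 : ℂ) • ∑ j ∈ J, ∑ k ∈ K, Aop op .bs .c n j (Aop op .b .cs m k w) := by
          simp only [map_smul, map_sum, ← Finset.smul_sum, smul_smul, Complex.I_mul_I]
  have hext1 : ∑ j ∈ J, ∑ k ∈ K, Aop op .b .cs m j (Aop op .bs .c n k w)
      = ∑ j ∈ K, ∑ k ∈ K, Aop op .b .cs m j (Aop op .bs .c n k w) := by
    refine Finset.sum_subset hJK (fun j _ hj => ?_)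
    rw [← map_sum]
    exact hASz j hj
  have hext2 : ∑ j ∈ J, ∑ k ∈ K, Aop op .bs .c n j (Aop op .b .cs m k w)
      = ∑ j ∈ K, ∑ k ∈ K, Aop op .bs .c n j (Aop op .b .cs m k w) := by
    refine Finset.sum_subset hJK (fun j _ hj => ?_)
    rw [← map_sum]
    exact hBSz j hj
  have hterm : ∀ j k : ℤ,
      Aop op .b .cs m j (Aop op .bs .c n k w) - Aop op .bs .c n k (Aop op .b .cs m j w)
      = (if j + k = m + n then op .b j (op .bs k w) else 0)
        + (if j + k = 0 then -(op .c (n-k) (op .cs (m-j) w)) else 0) := by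
    intro j k
    have h := LinearMap.congr_fun (comm4 hW m n j k) w
    simp only [LinearMap.sub_apply, Module.End.mul_apply, LinearMap.add_apply] at h
    rw [Aop_comm hW .b .cs rfl, Aop_comm hW .bs .c rfl]
    simp only [Module.End.mul_apply]
    split_ifs at h ⊢ <;>
      simpa only [Module.End.mul_apply, LinearMap.zero_apply, LinearMap.neg_apply,
        add_zero, zero_add] using h
  have hdouble : Xplus op m (Xminus op n w) - Xminus op n (Xplus op m w)
      = (-1 : ℂ) • ∑ j ∈ K, ∑ k ∈ K,
          (Aop op .b .cs m j (Aop op .bs .c n k w)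
            - Aop op .bs .c n k (Aop op .b .cs m j w)) := by
    rw [hsplit1, hsplit2, hext1, hext2, ← smul_sub]
    congr 1
    rw [show (∑ j ∈ K, ∑ k ∈ K, Aop op .bs .c n j (Aop op .b .cs m k w))
        = ∑ j ∈ K, ∑ k ∈ K, Aop op .bs .c n k (Aop op .b .cs m j w) from Finset.sum_comm,
      ← Finset.sum_sub_distrib]
    exact Finset.sum_congr rfl fun j _ => (Finset.sum_sub_distrib _ _).symm
  have hshrink : ∑ j ∈ K, ∑ k ∈ K,
        (Aop op .b .cs m j (Aop op .bs .c n k w)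
          - Aop op .bs .c n k (Aop op .b .cs m j w))
      = ∑ j ∈ J, ∑ k ∈ K,
        (Aop op .b .cs m j (Aop op .bs .c n k w)
          - Aop op .bs .c n k (Aop op .b .cs m j w)) := by
    symm
    refine Finset.sum_subset hJK (fun j _ hj => ?_)
    rw [Finset.sum_sub_distrib, ← map_sum, hASz j hj, zero_sub, neg_eq_zero]
    refine Finset.sum_eq_zero fun k _ => ?_
    rw [hAwz j hj, map_zero]
  have hinner : ∀ j ∈ J, (∑ k ∈ K,
        (Aop op .b .cs m j (Aop op .bs .c n k w)
          - Aop op .bs .c n k (Aop op .b .cs m j w)))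
      = op .b j (op .bs (m+n-j) w) - op .c (n+j) (op .cs (m-j) w) := by
    intro j hj
    rw [hJdef, Finset.mem_Ioo] at hj
    simp only [hterm]
    have e1 : (∑ k ∈ K, if j + k = m + n then op .b j (op .bs k w) else 0)
        = op .b j (op .bs (m+n-j) w) := by
      simp only [show ∀ k : ℤ, (j + k = m + n) ↔ (k = m + n - j) from fun k => by omega]
      rw [Finset.sum_ite_eq' K (m + n - j) (fun k => op .b j (op .bs k w)),
        if_pos (by rw [hKdef, Finset.mem_Ioo]; omega)]
    have e2 : (∑ k ∈ K, if j + k = 0 then -(op .c (n - k) (op .cs (m-j) w)) else 0)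
        = -(op .c (n+j) (op .cs (m-j) w)) := by
      simp only [show ∀ k : ℤ, (j + k = 0) ↔ (k = -j) from fun k => by omega]
      rw [Finset.sum_ite_eq' K (-j) (fun k => -(op .c (n - k) (op .cs (m-j) w))),
        if_pos (by rw [hKdef, Finset.mem_Ioo]; omega), show n - -j = n + j from by omega]
    rw [Finset.sum_add_distrib, e1, e2, ← sub_eq_add_neg]
  have hb : ∀ j : ℤ, op .b j (op .bs (m+n-j) w)
      = Aop op .b .bs (m+n) j w + (if 0 ≤ j ∧ m + n = 0 then (-1:ℂ) • w else 0) := by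
    intro j
    unfold Aop
    by_cases hj : j < 0
    · rw [if_pos hj, Module.End.mul_apply, if_neg (by omega), add_zero]
    · have h0 : 0 ≤ j := not_lt.mp hj
      rw [if_neg hj, Module.End.mul_apply, comm_apply hW .b .bs j (m+n-j) w]
      congr 1
      simp only [show (j + (m+n-j) = 0) ↔ (m + n = 0) from by omega,
        show pair4 .b .bs = (-1:ℂ) from rfl]
      split_ifs <;> tauto
  have hc2 : ∀ j : ℤ, op .c (n+j) (op .cs (m-j) w)
      = Aop op .c .cs (m+n) (n+j) w + (if 0 ≤ n + j ∧ m + n = 0 then (-1:ℂ) • w else 0) := by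
    intro j
    have hidx : m + n - (n + j) = m - j := by omega
    unfold Aop
    rw [hidx]
    by_cases hj : n + j < 0
    · rw [if_pos hj, Module.End.mul_apply, if_neg (by omega), add_zero]
    · have h0 : 0 ≤ n + j := not_lt.mp hj
      rw [if_neg hj, Module.End.mul_apply, comm_apply hW .c .cs (n+j) (m-j) w]
      congr 1
      simp only [show ((n+j) + (m-j) = 0) ↔ (m + n = 0) from by omega,
        show pair4 .c .cs = (-1:ℂ) from rfl]
      split_ifs <;> tauto
  have hT1 : ∑ j ∈ J, op .b j (op .bs (m+n-j) w)
      = noMode op .b .bs (m+n) w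
        + (if m + n = 0 then (M.toNat) • ((-1:ℂ) • w) else 0) := by
    simp only [hb]
    rw [Finset.sum_add_distrib]
    congr 1
    · exact (noMode_eq_sum hW hN hNw .b .bs (m+n)
        (Finset.Ioo_subset_Ioo (by omega) (by omega))).symm
    · by_cases hmn : m + n = 0
      · rw [if_pos hmn]
        simp only [hmn, and_true]
        rw [Finset.sum_ite, Finset.sum_const, Finset.sum_const_zero, add_zero]
        congr 1
        rw [show J.filter (fun j => 0 ≤ j) = Finset.Ico (0:ℤ) M from by
          ext j
          rw [hJdef]
          simp only [Finset.mem_filter, Finset.mem_Ioo, Finset.mem_Ico]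
          omega]
        rw [Int.card_Ico]
        norm_num
      · rw [if_neg hmn]
        refine Finset.sum_eq_zero fun j _ => ?_
        rw [if_neg (by tauto)]
  have hT2 : ∑ j ∈ J, op .c (n+j) (op .cs (m-j) w)
      = noMode op .c .cs (m+n) w
        + (if m + n = 0 then ((M+n).toNat) • ((-1:ℂ) • w) else 0) := by
    simp only [hc2]
    rw [Finset.sum_add_distrib]
    congr 1
    · rw [noMode_eq_sum hW hN hNw .c .cs (m+n)
        (Finset.Ioo_subset_Ioo (by omega) (by omega) :
          Finset.Ioo (m + n - N) N ⊆ Finset.Ioo (n + -M) (n + M)),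
        ← Finset.map_add_left_Ioo, Finset.sum_map]
      rfl
    · by_cases hmn : m + n = 0
      · rw [if_pos hmn]
        simp only [hmn, and_true]
        rw [Finset.sum_ite, Finset.sum_const, Finset.sum_const_zero, add_zero]
        congr 1
        rw [show J.filter (fun j => 0 ≤ n + j) = Finset.Ico (-n) M from by
          ext j
          rw [hJdef]
          simp only [Finset.mem_filter, Finset.mem_Ioo, Finset.mem_Ico]
          omega]
        rw [Int.card_Ico, show M - -n = M + n from by omega]
      · rw [if_neg hmn]
        refine Finset.sum_eq_zero fun j _ => ?_
        rw [if_neg (by tauto)]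
  rw [hdouble, hshrink, Finset.sum_congr rfl hinner, Finset.sum_sub_distrib, hT1, hT2]
  unfold alMode
  by_cases hmn : m + n = 0
  · rw [if_pos hmn, if_pos hmn, if_pos hmn]
    have hmc : (m : ℂ) = -(n : ℂ) := by
      have : m = -n := by omega
      rw [this]
      push_cast
      ring
    rw [hmc, ← Nat.cast_smul_eq_nsmul ℂ, ← Nat.cast_smul_eq_nsmul ℂ,
      show ((M.toNat : ℂ)) = (M : ℂ) from by
        rw [← Int.cast_natCast, Int.toNat_of_nonneg (by omega)],
      show (((M+n).toNat : ℂ)) = (M : ℂ) + (n : ℂ) from by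
        rw [← Int.cast_natCast, Int.toNat_of_nonneg (by omega)]
        push_cast
        ring]
    module
  · rw [if_neg hmn, if_neg hmn, if_neg hmn]
    module
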